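/- arXiv:2510.22458 — 4 statements merged into one kernel-verified Lean document; each statement's English description precedes it below -/
import Mathlib

section
/- Let B be a d×d real symmetric matrix and A an m×d real matrix. Suppose AA^T ⪰ γ_A·I with γ_A > 0, ‖B‖ ≤ Υ_B, and Z is a d×(d−m) matrix whose columns are orthonormal and span the null space of A. If Z^T B Z ⪰ γ·I for some γ > 0, then for any δ ≥ (Υ_B + γ/2 + 2Υ_B²/γ)/γ_A we have B + δ·A^T A ⪰ (γ/2)·I. -/
open scoped Matrix.Norms.L2Operator
open Matrix

private lemma mulVec_dot' {k l : ℕ} (M : Matrix (Fin k) (Fin l) ℝ) (u : Fin l → ℝ)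
    (v : Fin k → ℝ) : (M *ᵥ u) ⬝ᵥ v = u ⬝ᵥ (Mᵀ *ᵥ v) := by
  rw [dotProduct_comm, dotProduct_mulVec, ← mulVec_transpose, dotProduct_comm,
    dotProduct_comm u]

private lemma dot_eq_inner {k : ℕ} (x y : EuclideanSpace ℝ (Fin k)) :
    dotProduct (x : Fin k → ℝ) (y : Fin k → ℝ) = inner ℝ x y := by
  simp [dotProduct, PiLp.inner_apply, RCLike.inner_apply, mul_comm]

private lemma dot_self_eq_norm_sq {k : ℕ} (x : EuclideanSpace ℝ (Fin k)) :
    dotProduct (x : Fin k → ℝ) (x : Fin k → ℝ) = ‖x‖ ^ 2 := by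
  rw [dot_eq_inner]; exact real_inner_self_eq_norm_sq x

private lemma abs_dot_mulVec_le {k l : ℕ} (M : Matrix (Fin k) (Fin l) ℝ)
    (x : EuclideanSpace ℝ (Fin k)) (y : EuclideanSpace ℝ (Fin l)) :
    |dotProduct (x : Fin k → ℝ) (M *ᵥ (y : Fin l → ℝ))| ≤ ‖M‖ * ‖x‖ * ‖y‖ := by
  have h1 : dotProduct (x : Fin k → ℝ) (M *ᵥ (y : Fin l → ℝ)) =
      inner ℝ x ((EuclideanSpace.equiv (Fin k) ℝ).symm (M *ᵥ (y : Fin l → ℝ))) :=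
    dot_eq_inner x ((EuclideanSpace.equiv (Fin k) ℝ).symm (M *ᵥ (y : Fin l → ℝ)))
  rw [h1]
  calc |inner ℝ x ((EuclideanSpace.equiv (Fin k) ℝ).symm (M *ᵥ (y : Fin l → ℝ)))|
      ≤ ‖x‖ * ‖(EuclideanSpace.equiv (Fin k) ℝ).symm (M *ᵥ (y : Fin l → ℝ))‖ :=
        abs_real_inner_le_norm _ _
    _ ≤ ‖x‖ * (‖M‖ * ‖y‖) := by
        gcongr
        exact M.l2_opNorm_mulVec y
    _ = ‖M‖ * ‖x‖ * ‖y‖ := by ring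

private def toE {k : ℕ} (v : Fin k → ℝ) : EuclideanSpace ℝ (Fin k) := WithLp.toLp 2 v

/-- If `B` is a symmetric `d×d` real matrix with `‖B‖ ≤ ΥB`,
`A` is an `m×d` matrix with `A Aᵀ ⪰ γA • I` (`γA > 0`), and `Z` is a `d×(d−m)`
matrix with orthonormal columns spanning the null space of `A`, and
`Zᵀ B Z ⪰ γ • I` for some `γ > 0`, then for any
`δ ≥ (ΥB + γ/2 + 2ΥB²/γ)/γA` we have `B + δ Aᵀ A ⪰ (γ/2) • I`. -/
theorem stmt0 {d m : ℕ} (B : Matrix (Fin d) (Fin d) ℝ) (A : Matrix (Fin m) (Fin d) ℝ)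
    (Z : Matrix (Fin d) (Fin (d - m)) ℝ) (γA ΥB γ : ℝ)
    (hγA : 0 < γA) (hγ : 0 < γ)
    (hBsymm : B.IsSymm)
    (hA : (A * A.transpose - γA • (1 : Matrix (Fin m) (Fin m) ℝ)).PosSemidef)
    (hBnorm : ‖B‖ ≤ ΥB)
    (hZorth : Z.transpose * Z = (1 : Matrix (Fin (d - m)) (Fin (d - m)) ℝ))
    (hZnull : ∀ v : Fin d → ℝ, A.mulVec v = 0 ↔ ∃ w : Fin (d - m) → ℝ, Z.mulVec w = v)
    (hcurv : (Z.transpose * B * Z - γ • (1 : Matrix (Fin (d - m)) (Fin (d - m)) ℝ)).PosSemidef) :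
    ∀ δ : ℝ, (ΥB + γ / 2 + 2 * ΥB ^ 2 / γ) / γA ≤ δ →
      (B + δ • (A.transpose * A) - (γ / 2) • (1 : Matrix (Fin d) (Fin d) ℝ)).PosSemidef := by
  intro δ hδ
  have hΥB : 0 ≤ ΥB := le_trans (norm_nonneg B) hBnorm
  have hδ' : ΥB + γ / 2 + 2 * ΥB ^ 2 / γ ≤ δ * γA := by
    rw [div_le_iff₀ hγA] at hδ; linarith
  have hδ0 : 0 ≤ δ := by
    have h0 : 0 ≤ (ΥB + γ / 2 + 2 * ΥB ^ 2 / γ) / γA := by positivity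
    linarith
  -- positive semidefiniteness of A Aᵀ - γA I quadratic form bound
  have hps : ∀ u : Fin m → ℝ,
      γA * ((Aᵀ *ᵥ u) ⬝ᵥ (Aᵀ *ᵥ u)) ≤ (A *ᵥ (Aᵀ *ᵥ u)) ⬝ᵥ (A *ᵥ (Aᵀ *ᵥ u)) := by
    intro u
    set ν := (A * Aᵀ - γA • 1) *ᵥ u with hν
    have hνu : 0 ≤ u ⬝ᵥ ν := by simpa using hA.dotProduct_mulVec_nonneg u
    have hνν : 0 ≤ ν ⬝ᵥ ν := Finset.sum_nonneg fun i _ => mul_self_nonneg _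
    have hMu : A *ᵥ (Aᵀ *ᵥ u) = ν + γA • u := by
      rw [hν, Matrix.sub_mulVec, Matrix.smul_mulVec, Matrix.one_mulVec,
        Matrix.mulVec_mulVec, sub_add_cancel]
    have hx1self : (Aᵀ *ᵥ u) ⬝ᵥ (Aᵀ *ᵥ u) = u ⬝ᵥ (ν + γA • u) := by
      rw [mulVec_dot', transpose_transpose, hMu]
    rw [hx1self, hMu]
    have e : (ν + γA • u) ⬝ᵥ (ν + γA • u) - γA * (u ⬝ᵥ (ν + γA • u)) =
        ν ⬝ᵥ ν + γA * (u ⬝ᵥ ν) := by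
      simp only [dotProduct_add, add_dotProduct, dotProduct_smul, smul_dotProduct,
        smul_eq_mul, dotProduct_comm ν u]
      ring
    nlinarith [mul_nonneg hγA.le hνu]
  refine posSemidef_iff_dotProduct_mulVec.mpr ⟨?_, ?_⟩
  · rw [Matrix.IsHermitian, conjTranspose_eq_transpose_of_trivial]
    have hB' : Bᵀ = B := hBsymm
    simp [Matrix.transpose_add, Matrix.transpose_sub, Matrix.transpose_smul,
      Matrix.transpose_mul, Matrix.transpose_one, hB']
  · intro x
    have hstar : star x = x := by simp
    rw [hstar]
    set w : Fin (d - m) → ℝ := Zᵀ *ᵥ x with hw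
    set x₀ : Fin d → ℝ := Z *ᵥ w with hx₀
    set x₁ : Fin d → ℝ := x - x₀ with hx₁
    have hxsum : x = x₀ + x₁ := by rw [hx₁]; ring
    have hZZ : ∀ v : Fin (d - m) → ℝ, Zᵀ *ᵥ (Z *ᵥ v) = v := by
      intro v; rw [Matrix.mulVec_mulVec, hZorth, Matrix.one_mulVec]
    have hZt1 : Zᵀ *ᵥ x₁ = 0 := by
      rw [hx₁, Matrix.mulVec_sub, hx₀, hZZ, hw, sub_self]
    have hdot01 : x₀ ⬝ᵥ x₁ = 0 := by
      rw [hx₀, mulVec_dot', hZt1, dotProduct_zero]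
    have hAx₀ : A *ᵥ x₀ = 0 := (hZnull x₀).mpr ⟨w, rfl⟩
    have hx₀self : x₀ ⬝ᵥ x₀ = w ⬝ᵥ w := by rw [hx₀, mulVec_dot', hZZ]
    have hcurv' : γ * (x₀ ⬝ᵥ x₀) ≤ x₀ ⬝ᵥ (B *ᵥ x₀) := by
      have h := hcurv.dotProduct_mulVec_nonneg w
      rw [star_trivial] at h
      have e1 : (Zᵀ * B * Z - γ • 1) *ᵥ w = Zᵀ *ᵥ (B *ᵥ (Z *ᵥ w)) - γ • w := by
        rw [Matrix.sub_mulVec, Matrix.smul_mulVec, Matrix.one_mulVec,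
          ← Matrix.mulVec_mulVec, ← Matrix.mulVec_mulVec]
      rw [e1, dotProduct_sub, dotProduct_smul, smul_eq_mul] at h
      have e2 : x₀ ⬝ᵥ (B *ᵥ x₀) = w ⬝ᵥ (Zᵀ *ᵥ (B *ᵥ (Z *ᵥ w))) := by
        rw [hx₀, mulVec_dot']
      rw [e2, hx₀self]; linarith
    -- x₁ lies in the range of Aᵀ
    have hx₁mem : ∃ u : Fin m → ℝ, Aᵀ *ᵥ u = x₁ := by
      set K : Submodule ℝ (EuclideanSpace ℝ (Fin d)) :=
        LinearMap.range (Matrix.toEuclideanLin Aᵀ) with hK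
      obtain ⟨p, hp, q, hq, hpq⟩ :=
        K.exists_add_mem_mem_orthogonal (WithLp.toLp 2 x₁ : EuclideanSpace ℝ (Fin d))
      have hAq : A *ᵥ (q : Fin d → ℝ) = 0 := by
        have hmem : Matrix.toEuclideanLin Aᵀ
            ((WithLp.equiv 2 (Fin m → ℝ)).symm (A *ᵥ (q : Fin d → ℝ))) ∈ K :=
          LinearMap.mem_range_self _ _
        have h0 : inner (𝕜 := ℝ) (Matrix.toEuclideanLin Aᵀ
            ((WithLp.equiv 2 (Fin m → ℝ)).symm (A *ᵥ (q : Fin d → ℝ)))) q = 0 :=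
          (Submodule.mem_orthogonal K q).mp hq _ hmem
        have h1 : (Aᵀ *ᵥ (A *ᵥ (q : Fin d → ℝ))) ⬝ᵥ (q : Fin d → ℝ) = 0 := by
          exact (dot_eq_inner (Matrix.toEuclideanLin Aᵀ
            ((WithLp.equiv 2 (Fin m → ℝ)).symm (A *ᵥ (q : Fin d → ℝ)))) q).trans h0
        have h2 : (A *ᵥ (q : Fin d → ℝ)) ⬝ᵥ (A *ᵥ (q : Fin d → ℝ)) = 0 := by
          rw [mulVec_dot', dotProduct_comm]; exact h1
        exact dotProduct_self_eq_zero.mp h2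
      obtain ⟨w', hw'⟩ := (hZnull q).mp hAq
      have hx1pq : x₁ = (p : Fin d → ℝ) + (q : Fin d → ℝ) := congrArg WithLp.ofLp hpq
      have h1 : x₁ ⬝ᵥ (q : Fin d → ℝ) = 0 := by
        rw [← hw', dotProduct_comm, mulVec_dot', hZt1, dotProduct_zero]
      have h2 : (p : Fin d → ℝ) ⬝ᵥ (q : Fin d → ℝ) = 0 := by
        rw [dot_eq_inner]
        exact (Submodule.mem_orthogonal K q).mp hq p hp
      have h3 : (q : Fin d → ℝ) ⬝ᵥ (q : Fin d → ℝ) = 0 := by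
        rw [hx1pq, add_dotProduct] at h1; linarith
      have hq0 : (q : Fin d → ℝ) = 0 := dotProduct_self_eq_zero.mp h3
      obtain ⟨u, hu⟩ := hp
      exact ⟨u.ofLp, by rw [show (Aᵀ *ᵥ u.ofLp : Fin d → ℝ) = (p : Fin d → ℝ) from congrArg WithLp.ofLp hu, hx1pq, hq0,
        add_zero]⟩
    obtain ⟨u, hu⟩ := hx₁mem
    have hAx₁ : γA * (x₁ ⬝ᵥ x₁) ≤ (A *ᵥ x₁) ⬝ᵥ (A *ᵥ x₁) := by rw [← hu]; exact hps u
    -- norms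
    have ha2 : x₀ ⬝ᵥ x₀ = ‖toE x₀‖ ^ 2 := dot_self_eq_norm_sq (toE x₀)
    have hb2 : x₁ ⬝ᵥ x₁ = ‖toE x₁‖ ^ 2 := dot_self_eq_norm_sq (toE x₁)
    have hna0 : (0:ℝ) ≤ ‖toE x₀‖ := norm_nonneg _
    have hnb0 : (0:ℝ) ≤ ‖toE x₁‖ := norm_nonneg _
    have hxx : x ⬝ᵥ x = ‖toE x₀‖ ^ 2
        + ‖toE x₁‖ ^ 2 := by
      rw [hxsum, dotProduct_add, add_dotProduct, add_dotProduct, hdot01,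
        dotProduct_comm x₁ x₀, hdot01, ← ha2, ← hb2]; ring
    have hBx : x ⬝ᵥ (B *ᵥ x) = x₀ ⬝ᵥ (B *ᵥ x₀) + x₀ ⬝ᵥ (B *ᵥ x₁) + x₁ ⬝ᵥ (B *ᵥ x₀)
        + x₁ ⬝ᵥ (B *ᵥ x₁) := by
      rw [hxsum, Matrix.mulVec_add, dotProduct_add, add_dotProduct, add_dotProduct]; ring
    have hAx : A *ᵥ x = A *ᵥ x₁ := by
      rw [hxsum, Matrix.mulVec_add, hAx₀, zero_add]
    have hcross : ∀ (y z : Fin d → ℝ), |y ⬝ᵥ (B *ᵥ z)| ≤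
        ΥB * ‖toE y‖ * ‖toE z‖ := by
      intro y z
      exact le_trans (abs_dot_mulVec_le B (toE y) (toE z))
        (mul_le_mul_of_nonneg_right
          (mul_le_mul_of_nonneg_right hBnorm (norm_nonneg (toE y))) (norm_nonneg (toE z)))
    have hc1 := (abs_le.mp (hcross x₀ x₁)).1
    have hc2 := (abs_le.mp (hcross x₁ x₀)).1
    have hc3 := (abs_le.mp (hcross x₁ x₁)).1
    have hγ0 : γ * ‖toE x₀‖ ^ 2 ≤ x₀ ⬝ᵥ (B *ᵥ x₀) := by
      rw [← ha2]; exact hcurv'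
    have hAx₁' : γA * ‖toE x₁‖ ^ 2 ≤ (A *ᵥ x₁) ⬝ᵥ (A *ᵥ x₁) := by
      rw [← hb2]; exact hAx₁
    have hdel : (ΥB + γ / 2 + 2 * ΥB ^ 2 / γ) * ‖toE x₁‖ ^ 2 ≤
        δ * ((A *ᵥ x₁) ⬝ᵥ (A *ᵥ x₁)) := by
      have t1 : δ * (γA * ‖toE x₁‖ ^ 2) ≤
          δ * ((A *ᵥ x₁) ⬝ᵥ (A *ᵥ x₁)) := mul_le_mul_of_nonneg_left hAx₁' hδ0
      have t2 : (ΥB + γ / 2 + 2 * ΥB ^ 2 / γ) * ‖toE x₁‖ ^ 2 ≤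
          δ * γA * ‖toE x₁‖ ^ 2 :=
        mul_le_mul_of_nonneg_right hδ' (sq_nonneg _)
      have t3 := mul_assoc δ γA (‖toE x₁‖ ^ 2)
      linarith
    have key : x ⬝ᵥ ((B + δ • (Aᵀ * A) - (γ / 2) • 1) *ᵥ x) =
        x ⬝ᵥ (B *ᵥ x) + δ * ((A *ᵥ x) ⬝ᵥ (A *ᵥ x)) - γ / 2 * (x ⬝ᵥ x) := by
      rw [Matrix.sub_mulVec, Matrix.add_mulVec, Matrix.smul_mulVec,
        Matrix.smul_mulVec, Matrix.one_mulVec, dotProduct_sub, dotProduct_add,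
        dotProduct_smul, dotProduct_smul, smul_eq_mul, smul_eq_mul]
      have e : x ⬝ᵥ ((Aᵀ * A) *ᵥ x) = (A *ᵥ x) ⬝ᵥ (A *ᵥ x) := by
        rw [mulVec_dot', Matrix.mulVec_mulVec]
      rw [e]
    rw [key, hBx, hAx, hxx]
    have hcg : 2 * ΥB ^ 2 / γ * γ = 2 * ΥB ^ 2 := div_mul_cancel₀ _ hγ.ne'
    have hq : 0 ≤ γ / 2 * ‖toE x₀‖ ^ 2
        - 2 * ΥB * ‖toE x₀‖ * ‖toE x₁‖
        + 2 * ΥB ^ 2 / γ * ‖toE x₁‖ ^ 2 := by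
      nlinarith [sq_nonneg (γ * ‖toE x₀‖
        - 2 * ΥB * ‖toE x₁‖), hγ, hcg]
    linarith
end

section
/- Let Δ be a random vector in R^d with mutually independent entries, each symmetrically distributed about 0 with |Δ^j| ∈ [κ₁, κ₂] for κ₁, κ₂ > 0, and with all entries identically distributed. Then ‖E[(Δ^TΔ)·Δ^{-1}Δ^{-T}] − I‖ = (d−1)·E[(Δ^1)²]·E[1/(Δ^1)²], where Δ^{-1} is the entrywise reciprocal and ‖·‖ is the operator norm. -/
open MeasureTheory ProbabilityTheory
open scoped Matrix.Norms.L2Operator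

/-- Let `Δ` be a random vector in `ℝ^d` with mutually independent,
identically distributed entries, each symmetric about `0` with `|Δʲ| ∈ [κ₁, κ₂]`
a.s.  Then `‖E[(ΔᵀΔ)·Δ⁻¹Δ⁻ᵀ] − I‖ = (d−1)·E[(Δ¹)²]·E[1/(Δ¹)²]`, where the `(i,j)`
entry of `(ΔᵀΔ)Δ⁻¹Δ⁻ᵀ` is `(Σₗ (Δˡ)²)/(Δⁱ Δʲ)` and `‖·‖` is the operator norm. -/
theorem stmt4 {Ω : Type*} [MeasurableSpace Ω] (P : Measure Ω) [IsProbabilityMeasure P]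
    {d : ℕ} (hd : 0 < d) (Δ : Ω → Fin d → ℝ) (κ₁ κ₂ : ℝ) (hκ₁ : 0 < κ₁) (hκ₂ : 0 < κ₂)
    (hmeas : ∀ j, Measurable (fun ω => Δ ω j))
    (hindep : iIndepFun
      (fun j ω => Δ ω j) P)
    (hsymm : ∀ j, Measure.map (fun ω => Δ ω j) P = Measure.map (fun ω => -(Δ ω j)) P)
    (hident : ∀ j, Measure.map (fun ω => Δ ω j) P
      = Measure.map (fun ω => Δ ω ⟨0, hd⟩) P)
    (hbound : ∀ j, ∀ᵐ ω ∂P, κ₁ ≤ |Δ ω j| ∧ |Δ ω j| ≤ κ₂) :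
    ‖(Matrix.of fun i j : Fin d =>
        ∫ ω, (∑ l, (Δ ω l) ^ 2) / (Δ ω i * Δ ω j) ∂P) - (1 : Matrix (Fin d) (Fin d) ℝ)‖
      = ((d : ℝ) - 1) * (∫ ω, (Δ ω ⟨0, hd⟩) ^ 2 ∂P) * (∫ ω, 1 / (Δ ω ⟨0, hd⟩) ^ 2 ∂P) := by
  -- integrability of each term
  have hterm_int : ∀ i j l : Fin d,
      Integrable (fun ω => (Δ ω l) ^ 2 / (Δ ω i * Δ ω j)) P := by
    intro i j l
    refine Integrable.mono' (integrable_const (κ₂ ^ 2 / (κ₁ * κ₁)))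
      (((hmeas l).pow_const 2).div ((hmeas i).mul (hmeas j))).aestronglyMeasurable ?_
    filter_upwards [hbound i, hbound j, hbound l] with ω hi hj hl
    rw [Real.norm_eq_abs, abs_div, abs_mul, abs_pow]
    refine div_le_div₀ (by positivity) (by nlinarith [abs_nonneg (Δ ω l)]) (by positivity) ?_
    exact mul_le_mul hi.1 hj.1 hκ₁.le (le_trans hκ₁.le hi.1)
  -- expectation of odd functions of a coordinate is zero
  have hodd : ∀ (j : Fin d) (g : ℝ → ℝ), Measurable g → (∀ x, g (-x) = -g x) →
      ∫ ω, g (Δ ω j) ∂P = 0 := by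
    intro j g hg hganti
    have h1 : ∫ ω, g (Δ ω j) ∂P = ∫ x, g x ∂(P.map (fun ω => Δ ω j)) :=
      (integral_map (hmeas j).aemeasurable hg.aestronglyMeasurable).symm
    have h2 : ∫ x, g x ∂(P.map (fun ω => Δ ω j)) = ∫ ω, g (-(Δ ω j)) ∂P := by
      rw [hsymm j]
      exact integral_map (hmeas j).neg.aemeasurable hg.aestronglyMeasurable
    have h3 : ∫ ω, g (-(Δ ω j)) ∂P = - ∫ ω, g (Δ ω j) ∂P := by
      rw [← integral_neg]
      exact integral_congr_ae (Filter.Eventually.of_forall fun ω => hganti _)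
    have := h1.trans (h2.trans h3)
    linarith
  have hmean0 : ∀ j : Fin d, ∫ ω, Δ ω j ∂P = 0 := fun j =>
    hodd j (fun x => x) measurable_id (fun x => rfl)
  have hinv0 : ∀ j : Fin d, ∫ ω, 1 / Δ ω j ∂P = 0 := fun j =>
    hodd j (fun x => 1 / x) (measurable_const.div measurable_id)
      (fun x => show 1 / (-x) = -(1 / x) by rw [one_div, one_div, inv_neg])
  -- identical-distribution transfer
  have hid : ∀ (j : Fin d) (g : ℝ → ℝ), Measurable g →
      ∫ ω, g (Δ ω j) ∂P = ∫ ω, g (Δ ω ⟨0, hd⟩) ∂P := by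
    intro j g hg
    rw [← integral_map (hmeas j).aemeasurable hg.aestronglyMeasurable, hident j,
      integral_map (hmeas ⟨0, hd⟩).aemeasurable hg.aestronglyMeasurable]
  set A := ∫ ω, (Δ ω ⟨0, hd⟩) ^ 2 ∂P with hAdef
  set B := ∫ ω, 1 / (Δ ω ⟨0, hd⟩) ^ 2 ∂P with hBdef
  have hAnn : 0 ≤ A := integral_nonneg (fun ω => sq_nonneg _)
  have hBnn : 0 ≤ B := integral_nonneg (fun ω => by positivity)
  -- the entries of the matrix
  have hentry : ∀ i j : Fin d, (∫ ω, (∑ l, (Δ ω l) ^ 2) / (Δ ω i * Δ ω j) ∂P)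
      = if i = j then 1 + ((d : ℝ) - 1) * A * B else 0 := by
    intro i j
    simp_rw [Finset.sum_div]
    rw [integral_finset_sum _ (fun l _ => hterm_int i j l)]
    by_cases hij : i = j
    · subst hij
      rw [if_pos rfl]
      have hval : ∀ l : Fin d, (∫ ω, (Δ ω l) ^ 2 / (Δ ω i * Δ ω i) ∂P)
          = if l = i then 1 else A * B := by
        intro l
        by_cases hli : l = i
        · subst hli
          rw [if_pos rfl]
          have heq : (fun ω => (Δ ω l) ^ 2 / (Δ ω l * Δ ω l)) =ᵐ[P] (fun _ => (1:ℝ)) := by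
            filter_upwards [hbound l] with ω h
            have hne : Δ ω l ≠ 0 := fun h0 => by rw [h0, abs_zero] at h; linarith [h.1]
            field_simp [sq]
          rw [integral_congr_ae heq]
          simp
        · rw [if_neg hli]
          have hprod : (fun ω => (Δ ω l) ^ 2 / (Δ ω i * Δ ω i))
              = ((fun x : ℝ => x ^ 2) ∘ (fun ω => Δ ω l))
                * ((fun x : ℝ => 1 / (x * x)) ∘ (fun ω => Δ ω i)) := by
            funext ω
            simp only [Pi.mul_apply, Function.comp_apply]
            rw [mul_one_div, div_eq_mul_one_div]
          have hind : IndepFun ((fun x : ℝ => x ^ 2) ∘ (fun ω => Δ ω l))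
              ((fun x : ℝ => 1 / (x * x)) ∘ (fun ω => Δ ω i)) P :=
            (hindep.indepFun hli).comp (measurable_id.pow_const 2)
              (measurable_const.div (measurable_id.mul measurable_id))
          rw [hprod, hind.integral_mul_eq_mul_integral
            ((hmeas l).pow_const 2).aestronglyMeasurable
            (measurable_const.div ((hmeas i).mul (hmeas i))).aestronglyMeasurable]
          have e1 : ∫ ω, ((fun x : ℝ => x ^ 2) ∘ (fun ω => Δ ω l)) ω ∂P = A := by
            rw [hAdef]; exact hid l (fun x => x ^ 2) (measurable_id.pow_const 2)
          have e2 : ∫ ω, ((fun x : ℝ => 1 / (x * x)) ∘ (fun ω => Δ ω i)) ω ∂P = B := by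
            rw [hBdef]
            have h := hid i (fun x => 1 / (x * x))
              (measurable_const.div (measurable_id.mul measurable_id))
            simp only [Function.comp_apply]
            rw [h]
            simp_rw [← sq]
          rw [e1, e2]
      calc ∑ l : Fin d, ∫ ω, (Δ ω l) ^ 2 / (Δ ω i * Δ ω i) ∂P
          = ∑ l : Fin d, if l = i then (1:ℝ) else A * B :=
            Finset.sum_congr rfl (fun l _ => hval l)
        _ = (if i = i then (1:ℝ) else A * B)
              + ∑ l ∈ Finset.univ.erase i, (if l = i then (1:ℝ) else A * B) :=
            (Finset.add_sum_erase _ _ (Finset.mem_univ i)).symm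
        _ = 1 + ((d : ℝ) - 1) * A * B := by
            rw [if_pos rfl,
              Finset.sum_congr rfl (fun l hl => if_neg (Finset.ne_of_mem_erase hl)),
              Finset.sum_const, Finset.card_erase_of_mem (Finset.mem_univ i)]
            simp only [Finset.card_univ, Fintype.card_fin, nsmul_eq_mul]
            rw [Nat.cast_sub hd]
            push_cast
            ring
      done
    · rw [if_neg hij]
      refine Finset.sum_eq_zero (fun l _ => ?_)
      by_cases hli : l = i
      · -- term Δᵢ²/(ΔᵢΔⱼ) = Δᵢ · (1/Δⱼ), expectation 0·0
        subst hli
        have hprod : (fun ω => (Δ ω l) ^ 2 / (Δ ω l * Δ ω j))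
            = ((fun x : ℝ => x) ∘ (fun ω => Δ ω l))
              * ((fun x : ℝ => 1 / x) ∘ (fun ω => Δ ω j)) := by
          funext ω
          simp only [Pi.mul_apply, Function.comp_apply]
          rcases eq_or_ne (Δ ω l) 0 with h | h
          · simp [h]
          · rw [sq, mul_div_mul_left _ _ h, mul_one_div]
        have hind : IndepFun ((fun x : ℝ => x) ∘ (fun ω => Δ ω l))
            ((fun x : ℝ => 1 / x) ∘ (fun ω => Δ ω j)) P :=
          (hindep.indepFun hij).comp measurable_id (measurable_const.div measurable_id)
        rw [hprod, hind.integral_mul_eq_mul_integral (hmeas l).aestronglyMeasurable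
          (measurable_const.div (hmeas j)).aestronglyMeasurable]
        have : ∫ ω, ((fun x : ℝ => x) ∘ (fun ω => Δ ω l)) ω ∂P = 0 := hmean0 l
        rw [this, zero_mul]
      · by_cases hlj : l = j
        · -- term Δⱼ²/(ΔᵢΔⱼ) = (1/Δᵢ) · Δⱼ, expectation 0·0
          subst hlj
          have hprod : (fun ω => (Δ ω l) ^ 2 / (Δ ω i * Δ ω l))
              = ((fun x : ℝ => 1 / x) ∘ (fun ω => Δ ω i))
                * ((fun x : ℝ => x) ∘ (fun ω => Δ ω l)) := by
            funext ω
            simp only [Pi.mul_apply, Function.comp_apply]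
            rcases eq_or_ne (Δ ω l) 0 with h | h
            · simp [h]
            · rw [sq, mul_comm (Δ ω i), mul_div_mul_left _ _ h, one_div_mul_eq_div]
          have hind : IndepFun ((fun x : ℝ => 1 / x) ∘ (fun ω => Δ ω i))
              ((fun x : ℝ => x) ∘ (fun ω => Δ ω l)) P :=
            (hindep.indepFun (Ne.symm hli)).comp (measurable_const.div measurable_id)
              measurable_id
          rw [hprod, hind.integral_mul_eq_mul_integral (measurable_const.div (hmeas i)).aestronglyMeasurable
            (hmeas l).aestronglyMeasurable]
          have : ∫ ω, ((fun x : ℝ => x) ∘ (fun ω => Δ ω l)) ω ∂P = 0 := hmean0 l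
          rw [this, mul_zero]
        · -- l ∉ {i, j}: term = (Δₗ²/Δᵢ) · (1/Δⱼ), second factor has mean 0
          have hprod : (fun ω => (Δ ω l) ^ 2 / (Δ ω i * Δ ω j))
              = ((fun p : ℝ × ℝ => p.1 ^ 2 / p.2) ∘ (fun ω => (Δ ω l, Δ ω i)))
                * ((fun x : ℝ => 1 / x) ∘ (fun ω => Δ ω j)) := by
            funext ω
            simp only [Pi.mul_apply, Function.comp_apply]
            rw [mul_one_div, div_div]
          have hind : IndepFun
              ((fun p : ℝ × ℝ => p.1 ^ 2 / p.2) ∘ (fun ω => (Δ ω l, Δ ω i)))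
              ((fun x : ℝ => 1 / x) ∘ (fun ω => Δ ω j)) P := by
            have hpair := hindep.indepFun_prodMk hmeas l i j hlj hij
            exact hpair.comp ((measurable_fst.pow_const 2).div measurable_snd)
              (measurable_const.div measurable_id)
          rw [hprod, hind.integral_mul_eq_mul_integral
            (((hmeas l).pow_const 2).div (hmeas i)).aestronglyMeasurable
            (measurable_const.div (hmeas j)).aestronglyMeasurable]
          have : ∫ ω, ((fun x : ℝ => 1 / x) ∘ (fun ω => Δ ω j)) ω ∂P = 0 := hinv0 j
          rw [this, mul_zero]
  -- the matrix is a scalar multiple of the identity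
  have hM : (Matrix.of fun i j : Fin d =>
        ∫ ω, (∑ l, (Δ ω l) ^ 2) / (Δ ω i * Δ ω j) ∂P) - (1 : Matrix (Fin d) (Fin d) ℝ)
      = (((d : ℝ) - 1) * A * B) • (1 : Matrix (Fin d) (Fin d) ℝ) := by
    ext i j
    simp only [Matrix.sub_apply, Matrix.of_apply, Matrix.smul_apply, Matrix.one_apply,
      smul_eq_mul, hentry i j]
    by_cases h : i = j <;> simp [h]
  rw [hM, norm_smul]
  haveI : Nonempty (Fin d) := ⟨⟨0, hd⟩⟩
  haveI : Nontrivial (Matrix (Fin d) (Fin d) ℝ) := by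
    refine ⟨0, 1, fun h => ?_⟩
    have := congrFun (congrFun h ⟨0, hd⟩) ⟨0, hd⟩
    simp [Matrix.one_apply] at this
  rw [CStarRing.norm_one, mul_one, Real.norm_eq_abs, abs_of_nonneg]
  have h1d : (1 : ℝ) ≤ (d : ℝ) := by exact_mod_cast hd
  exact mul_nonneg (mul_nonneg (by linarith) hAnn) hBnn
end

section
/- Let τ, σ > 0 with σ ∈ (0,1), and let g, d ∈ R^d, B ∈ R^{d×d}, c ∈ R^m. Define Δq = −τ(g^T d + (1/2)max{d^T B d, 0}) + ‖c‖. Suppose τ ≤ τ_trial where τ_trial = (1−σ)‖c‖/(g^T d + max{d^T B d, 0}) if g^T d + max{d^T B d, 0} > 0, and τ_trial = +∞ otherwise. Then Δq ≥ (τ/2)·max{d^T B d, 0} + σ‖c‖. -/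
/-- The Euclidean norm of a finite real vector. -/
noncomputable def euclNorm {n : Type*} [Fintype n] (v : n → ℝ) : ℝ :=
  Real.sqrt (dotProduct v v)

/-- Merit-parameter sufficient decrease: with
`Δq = −τ(gᵀd + (1/2)max{dᵀBd, 0}) + ‖c‖` and `τ ≤ τ_trial`, where
`τ_trial = (1−σ)‖c‖/(gᵀd + max{dᵀBd,0})` if `gᵀd + max{dᵀBd,0} > 0` (and `+∞`
otherwise), one has `Δq ≥ (τ/2)·max{dᵀBd, 0} + σ‖c‖`. -/
theorem stmt17 {n m : ℕ} (τ σ : ℝ) (hτ : 0 < τ) (hσ0 : 0 < σ) (hσ1 : σ < 1)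
    (g dvec : Fin n → ℝ) (B : Matrix (Fin n) (Fin n) ℝ) (c : Fin m → ℝ)
    (hτtrial : 0 < dotProduct g dvec + max (dotProduct dvec (B.mulVec dvec)) 0 →
      τ ≤ (1 - σ) * euclNorm c /
        (dotProduct g dvec + max (dotProduct dvec (B.mulVec dvec)) 0)) :
    (τ / 2) * max (dotProduct dvec (B.mulVec dvec)) 0 + σ * euclNorm c
      ≤ -τ * (dotProduct g dvec
            + (1 / 2) * max (dotProduct dvec (B.mulVec dvec)) 0)
        + euclNorm c := by
  set s := dotProduct g dvec
  set q := max (dotProduct dvec (B.mulVec dvec)) 0 with hq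
  have hc : 0 ≤ euclNorm c := Real.sqrt_nonneg _
  have key : τ * (s + q) ≤ (1 - σ) * euclNorm c := by
    rcases le_or_gt (s + q) 0 with h | h
    · calc τ * (s + q) ≤ 0 := mul_nonpos_of_nonneg_of_nonpos hτ.le h
        _ ≤ (1 - σ) * euclNorm c := mul_nonneg (by linarith) hc
    · have := hτtrial h
      calc τ * (s + q) ≤ ((1 - σ) * euclNorm c / (s + q)) * (s + q) :=
            mul_le_mul_of_nonneg_right this h.le
        _ = (1 - σ) * euclNorm c := div_mul_cancel₀ _ h.ne'
  linarith
end

section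
/- Let (a_k) be a nonnegative real sequence with Σ_{k=0}^∞ a_k = ∞, let ε* > 0, and suppose there exist a constant Υ > 0 and a sequence (q_k) of nonnegative reals such that |q_{k+1} − q_k| ≤ Υ a_k for all k, lim inf_k q_k = 0, and Σ_{k=0}^∞ a_k q_k² < ∞. Then lim_{k→∞} q_k = 0. -/
open Filter

/-- The liminf-to-lim upgrade: if `a_k ≥ 0` with `Σ a_k = ∞`,
`ε* > 0`, and `q_k ≥ 0` satisfies `|q_{k+1} − q_k| ≤ Υ a_k`, `liminf q_k = 0`, and
`Σ a_k q_k² < ∞`, then `q_k → 0`. -/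
theorem stmt19 (a q : ℕ → ℝ) (εstar Υ : ℝ) (hεstar : 0 < εstar) (hΥ : 0 < Υ)
    (ha : ∀ k, 0 ≤ a k)
    (hdiv : Tendsto (fun n => ∑ k ∈ Finset.range n, a k) atTop atTop)
    (hq : ∀ k, 0 ≤ q k)
    (hlip : ∀ k, |q (k + 1) - q k| ≤ Υ * a k)
    (hliminf : Filter.liminf q atTop = 0)
    (hsum : Summable (fun k => a k * (q k) ^ 2)) :
    Tendsto q atTop (nhds 0) := by
  classical
  set f : ℕ → ℝ := fun k => a k * (q k) ^ 2 with hf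
  have hfnn : ∀ k, 0 ≤ f k := fun k => mul_nonneg (ha k) (sq_nonneg _)
  -- from divergence of ∑ a and summability of ∑ a q², q drops below any e
  -- infinitely often
  have hfreq : ∀ e : ℝ, 0 < e → ∀ m : ℕ, ∃ n, m < n ∧ q n < e := by
    intro e he m
    by_contra hcon
    push_neg at hcon
    -- then a n ≤ f n / e² for n > m, so a is summable, contradicting hdiv
    have hsummable : Summable a := by
      rw [← summable_nat_add_iff (m + 1)]
      apply Summable.of_nonneg_of_le (fun n => ha _)
        (f := fun n => f (n + (m + 1)) / e ^ 2)
      · intro n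
        have h1 : e ≤ q (n + (m + 1)) := hcon _ (Nat.lt_add_left n (Nat.lt_succ_self m))
        rw [le_div_iff₀ (by positivity)]
        have : e ^ 2 ≤ q (n + (m + 1)) ^ 2 := by nlinarith
        have := mul_le_mul_of_nonneg_left this (ha (n + (m + 1)))
        calc a (n + (m + 1)) * e ^ 2 ≤ a (n + (m + 1)) * q (n + (m + 1)) ^ 2 := this
          _ = f (n + (m + 1)) := rfl
      · exact ((summable_nat_add_iff (m + 1)).2 hsum).div_const _
    exact (not_summable_iff_tendsto_nat_atTop_of_nonneg ha).2 hdiv hsummable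
  rw [Metric.tendsto_atTop]
  intro ε hε
  obtain ⟨e, he_def⟩ : ∃ e : ℝ, e = ε / 2 := ⟨_, rfl⟩
  have he : 0 < e := by rw [he_def]; positivity
  obtain ⟨δ, hδ_def⟩ : ∃ δ : ℝ, δ = e ^ 3 / Υ := ⟨_, rfl⟩
  have hδ : 0 < δ := by rw [hδ_def]; positivity
  -- tail sums go to 0
  have htail : Tendsto (fun i => ∑' k, f (k + i)) atTop (nhds 0) :=
    tendsto_sum_nat_add f
  obtain ⟨N, hN⟩ := (htail.eventually (gt_mem_nhds hδ)).exists_forall_of_atTop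
  have hNtail : ∑' k, f (k + N) < δ := hN N le_rfl
  refine ⟨N, fun m hm => ?_⟩
  rw [Real.dist_eq, sub_zero, abs_of_nonneg (hq m)]
  by_contra hqm
  push_neg at hqm
  -- q m ≥ ε = 2e; find least n > m with q n < e
  have hex : ∃ n, m < n ∧ q n < e := hfreq e he m
  set n₀ := Nat.find hex with hn₀def
  obtain ⟨hmn₀, hqn₀⟩ := Nat.find_spec hex
  have hmin : ∀ k, m ≤ k → k < n₀ → e ≤ q k := by
    intro k hmk hkn
    rcases Nat.lt_or_ge m k with hlt | hge
    · by_contra hc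
      push_neg at hc
      exact (Nat.find_min hex hkn) ⟨hlt, hc⟩
    · have : k = m := le_antisymm hge hmk
      subst this
      linarith [hqm]
  -- telescoping bound
  have htel : ∑ k ∈ Finset.Ico m n₀, (q (k + 1) - q k) = q n₀ - q m := by
    rw [Finset.sum_Ico_eq_sub _ hmn₀.le, Finset.sum_range_sub, Finset.sum_range_sub]
    ring
  have hstep : e ≤ Υ * ∑ k ∈ Finset.Ico m n₀, a k := by
    have h1 : e ≤ q m - q n₀ := by linarith [hqm, hqn₀]
    have h2 : q m - q n₀ ≤ ∑ k ∈ Finset.Ico m n₀, |q (k + 1) - q k| := by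
      calc q m - q n₀ = -(∑ k ∈ Finset.Ico m n₀, (q (k + 1) - q k)) := by
              rw [htel]; ring
        _ ≤ |∑ k ∈ Finset.Ico m n₀, (q (k + 1) - q k)| := neg_le_abs _
        _ ≤ ∑ k ∈ Finset.Ico m n₀, |q (k + 1) - q k| :=
              Finset.abs_sum_le_sum_abs _ _
    have h3 : ∑ k ∈ Finset.Ico m n₀, |q (k + 1) - q k|
        ≤ ∑ k ∈ Finset.Ico m n₀, Υ * a k :=
      Finset.sum_le_sum fun k _ => hlip k
    rw [Finset.mul_sum]
    linarith
  -- lower bound on weighted sum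
  have hlow : δ ≤ ∑ k ∈ Finset.Ico m n₀, f k := by
    have h1 : ∀ k ∈ Finset.Ico m n₀, e ^ 2 * a k ≤ f k := by
      intro k hk
      rw [Finset.mem_Ico] at hk
      have hqk := hmin k hk.1 hk.2
      have h2 : e ^ 2 ≤ q k ^ 2 := by nlinarith
      calc e ^ 2 * a k ≤ q k ^ 2 * a k :=
            mul_le_mul_of_nonneg_right h2 (ha k)
        _ = f k := by show _ = a k * q k ^ 2; ring
    calc δ = e ^ 2 * (e / Υ) := by rw [hδ_def]; field_simp
      _ ≤ e ^ 2 * ∑ k ∈ Finset.Ico m n₀, a k := by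
          apply mul_le_mul_of_nonneg_left _ (sq_nonneg e)
          rw [div_le_iff₀ hΥ]
          linarith [hstep]
      _ = ∑ k ∈ Finset.Ico m n₀, e ^ 2 * a k := Finset.mul_sum _ _ _
      _ ≤ ∑ k ∈ Finset.Ico m n₀, f k := Finset.sum_le_sum h1
  -- upper bound via tail
  have hup : ∑ k ∈ Finset.Ico m n₀, f k < δ := by
    have hsub : ∑ k ∈ Finset.Ico m n₀, f k ≤ ∑ k ∈ Finset.Ico N n₀, f k :=
      Finset.sum_le_sum_of_subset_of_nonneg (Finset.Ico_subset_Ico hm le_rfl)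
        (fun k _ _ => hfnn k)
    have heq : ∑ k ∈ Finset.Ico N n₀, f k
        = ∑ j ∈ Finset.range (n₀ - N), f (j + N) := by
      rw [Finset.sum_Ico_eq_sum_range]
      exact Finset.sum_congr rfl fun j _ => by rw [add_comm]
    have hle : ∑ j ∈ Finset.range (n₀ - N), f (j + N) ≤ ∑' k, f (k + N) :=
      Summable.sum_le_tsum _ (fun j _ => hfnn _) ((summable_nat_add_iff N).2 hsum)
    calc ∑ k ∈ Finset.Ico m n₀, f k ≤ ∑ j ∈ Finset.range (n₀ - N), f (j + N) := by
          rw [← heq]; exact hsub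
      _ ≤ ∑' k, f (k + N) := hle
      _ < δ := hNtail
  linarith
end
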